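/- Let α > 0, let Φ : (0,α] → ℝ be continuous, and set u* = Φ(α). Let G be the kernel associated with α and Φ. Then G(θ)/√(1−θ) → √(2/π) · u*/α as θ → 1⁻. -/

import Mathlib

open MeasureTheory Set Filter Topology

/-- The kernel G associated with α and Φ:
G(θ) = (α/√π) ∫_{α|θ|}^{α} (ζ² - α²θ²)^{-1/2}
         exp(-α²ζ²(1-θ)²/(4(ζ² - α²θ²))) Φ(ζ)/ζ² dζ. -/
noncomputable def kernelG (α : ℝ) (Φ : ℝ → ℝ) (θ : ℝ) : ℝ :=
  (α / Real.sqrt Real.pi) *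
    ∫ ζ in (α * |θ|)..α,
      (1 / Real.sqrt (ζ ^ 2 - α ^ 2 * θ ^ 2)) *
        Real.exp (-(α ^ 2 * ζ ^ 2 * (1 - θ) ^ 2) / (4 * (ζ ^ 2 - α ^ 2 * θ ^ 2))) *
        (Φ ζ / ζ ^ 2)

/-- The integrand of the kernel after the substitution ζ = α(θ + (1-θ)t). -/
noncomputable def gAux (α : ℝ) (Φ : ℝ → ℝ) (θ t : ℝ) : ℝ :=
  (1 / Real.sqrt (t * (2 * θ + (1 - θ) * t))) *
    Real.exp (-(α ^ 2 * (θ + (1 - θ) * t) ^ 2 * (1 - θ)) /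
      (4 * (t * (2 * θ + (1 - θ) * t)))) *
    (Φ (α * (θ + (1 - θ) * t)) / (α * (θ + (1 - θ) * t)) ^ 2)

lemma subst_pointwise (α : ℝ) (hα : 0 < α) (Φ : ℝ → ℝ) {θ : ℝ} (hθ : θ ∈ Set.Ioo (0:ℝ) 1)
    {t : ℝ} (ht : t ∈ Set.Ioc (0:ℝ) 1) :
    (fun ζ => (1 / Real.sqrt (ζ ^ 2 - α ^ 2 * θ ^ 2)) *
        Real.exp (-(α ^ 2 * ζ ^ 2 * (1 - θ) ^ 2) / (4 * (ζ ^ 2 - α ^ 2 * θ ^ 2))) *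
        (Φ ζ / ζ ^ 2)) (α * (1 - θ) * t + α * θ)
      = (1 / (α * Real.sqrt (1 - θ))) * gAux α Φ θ t := by
  obtain ⟨hθ0, hθ1⟩ := hθ
  obtain ⟨ht0, ht1⟩ := ht
  have h1θ : (0:ℝ) < 1 - θ := by linarith
  set u : ℝ := θ + (1 - θ) * t with hu
  have hζ : α * (1 - θ) * t + α * θ = α * u := by rw [hu]; ring
  set B : ℝ := t * (2 * θ + (1 - θ) * t) with hB
  have hBpos : 0 < B := by
    have : 0 < 2 * θ + (1 - θ) * t := by nlinarith
    exact mul_pos ht0 this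
  have hkey : (α * u) ^ 2 - α ^ 2 * θ ^ 2 = (α ^ 2 * (1 - θ)) * B := by
    rw [hu, hB]; ring
  have hsqrt : Real.sqrt ((α ^ 2 * (1 - θ)) * B)
      = α * Real.sqrt (1 - θ) * Real.sqrt B := by
    rw [Real.sqrt_mul (by positivity), Real.sqrt_mul (by positivity), Real.sqrt_sq hα.le]
  have hexp : -(α ^ 2 * (α * u) ^ 2 * (1 - θ) ^ 2) / (4 * ((α ^ 2 * (1 - θ)) * B))
      = -(α ^ 2 * u ^ 2 * (1 - θ)) / (4 * B) := by
    field_simp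
  simp only [hζ]
  rw [gAux]
  rw [hkey, hsqrt, hexp, ← hB, ← hu]
  have : (0:ℝ) < α * u := by
    have : 0 < u := by rw [hu]; nlinarith
    positivity
  ring

lemma kernelG_repr (α : ℝ) (hα : 0 < α) (Φ : ℝ → ℝ) {θ : ℝ} (hθ : θ ∈ Set.Ioo (0:ℝ) 1) :
    kernelG α Φ θ / Real.sqrt (1 - θ)
      = (α / Real.sqrt Real.pi) * ∫ t in Set.Ioc (0:ℝ) 1, gAux α Φ θ t := by
  obtain ⟨hθ0, hθ1⟩ := hθ
  have h1θ : (0:ℝ) < 1 - θ := by linarith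
  set F : ℝ → ℝ := fun ζ =>
    (1 / Real.sqrt (ζ ^ 2 - α ^ 2 * θ ^ 2)) *
      Real.exp (-(α ^ 2 * ζ ^ 2 * (1 - θ) ^ 2) / (4 * (ζ ^ 2 - α ^ 2 * θ ^ 2))) *
      (Φ ζ / ζ ^ 2) with hF
  have hc : α * (1 - θ) ≠ 0 := by positivity
  have hcomp : ∫ t in (0:ℝ)..1, F (α * (1 - θ) * t + α * θ)
      = (α * (1 - θ))⁻¹ • ∫ ζ in (α * (1-θ) * 0 + α * θ)..(α * (1-θ) * 1 + α * θ), F ζ :=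
    intervalIntegral.integral_comp_mul_add F hc (α * θ)
  have hends : α * (1-θ) * 0 + α * θ = α * θ ∧ α * (1-θ) * 1 + α * θ = α := by constructor <;> ring
  rw [hends.1, hends.2] at hcomp
  have hint : ∫ ζ in (α * θ)..α, F ζ
      = (α * (1 - θ)) * ∫ t in (0:ℝ)..1, F (α * (1 - θ) * t + α * θ) := by
    rw [hcomp, smul_eq_mul, ← mul_assoc, mul_inv_cancel₀ hc, one_mul]
  have habs : α * |θ| = α * θ := by rw [abs_of_pos hθ0]
  -- convert inner interval integral to set integral and apply pointwise subst
  have hset : ∫ t in (0:ℝ)..1, F (α * (1 - θ) * t + α * θ)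
      = ∫ t in Set.Ioc (0:ℝ) 1, (1 / (α * Real.sqrt (1 - θ))) * gAux α Φ θ t := by
    rw [intervalIntegral.integral_of_le (by norm_num)]
    refine setIntegral_congr_ae measurableSet_Ioc ?_
    filter_upwards with t ht
    exact subst_pointwise α hα Φ ⟨hθ0, hθ1⟩ ht
  rw [MeasureTheory.integral_const_mul] at hset
  rw [kernelG, habs, ← hF, hint, hset]
  have hs : Real.sqrt (1 - θ) ^ 2 = 1 - θ := Real.sq_sqrt h1θ.le
  have hs0 : Real.sqrt (1 - θ) ≠ 0 := by positivity
  rw [← hs]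
  have hπ : Real.sqrt Real.pi ≠ 0 := by positivity
  field_simp
  have hs' : Real.sqrt (Real.sqrt (1 - θ) ^ 2) ^ 2 = Real.sqrt (1 - θ) ^ 2 := Real.sq_sqrt (sq_nonneg _)
  linear_combination - (∫ (a : ℝ) in Set.Ioc (0:ℝ) 1, gAux α Φ θ a) * hs'

lemma gAux_contOn (α : ℝ) (hα : 0 < α) (Φ : ℝ → ℝ) (hΦ : ContinuousOn Φ (Ioc 0 α))
    {θ : ℝ} (hθ : θ ∈ Ioo (0:ℝ) 1) :
    ContinuousOn (gAux α Φ θ) (Ioc (0:ℝ) 1) := by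
  obtain ⟨hθ0, hθ1⟩ := hθ
  have hBpos : ∀ t ∈ Ioc (0:ℝ) 1, 0 < t * (2 * θ + (1 - θ) * t) := by
    intro t ht
    have : 0 < 2 * θ + (1 - θ) * t := by nlinarith [ht.1, ht.2]
    exact mul_pos ht.1 this
  have hupos : ∀ t ∈ Ioc (0:ℝ) 1, 0 < θ + (1 - θ) * t := by
    intro t ht; nlinarith [ht.1, ht.2]
  have hBcont : ContinuousOn (fun t : ℝ => t * (2 * θ + (1 - θ) * t)) (Ioc (0:ℝ) 1) := by
    fun_prop
  have h1 : ContinuousOn (fun t : ℝ => 1 / Real.sqrt (t * (2 * θ + (1 - θ) * t)))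
      (Ioc (0:ℝ) 1) := by
    apply ContinuousOn.div continuousOn_const
      (Real.continuous_sqrt.comp_continuousOn hBcont)
    intro t ht
    exact (Real.sqrt_pos.2 (hBpos t ht)).ne'
  have h2 : ContinuousOn (fun t : ℝ => Real.exp (-(α ^ 2 * (θ + (1 - θ) * t) ^ 2 * (1 - θ)) /
      (4 * (t * (2 * θ + (1 - θ) * t))))) (Ioc (0:ℝ) 1) := by
    apply Real.continuous_exp.comp_continuousOn
    apply ContinuousOn.div (by fun_prop) (by fun_prop)
    intro t ht
    have := hBpos t ht
    positivity
  have h3 : ContinuousOn (fun t : ℝ => Φ (α * (θ + (1 - θ) * t)) /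
      (α * (θ + (1 - θ) * t)) ^ 2) (Ioc (0:ℝ) 1) := by
    apply ContinuousOn.div
    · apply hΦ.comp (by fun_prop : ContinuousOn (fun t : ℝ => α * (θ + (1 - θ) * t)) (Ioc (0:ℝ) 1))
      intro t ht
      constructor
      · exact mul_pos hα (hupos t ht)
      · have h : θ + (1 - θ) * t ≤ 1 := by nlinarith [ht.1, ht.2]
        simpa using mul_le_mul_of_nonneg_left h hα.le
    · fun_prop
    · intro t ht
      have := hupos t ht
      positivity
  exact (h1.mul h2).mul h3

lemma gAux_tendsto (α : ℝ) (hα : 0 < α) (Φ : ℝ → ℝ) (hΦ : ContinuousOn Φ (Ioc 0 α))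
    {t : ℝ} (ht : t ∈ Ioc (0:ℝ) 1) :
    Tendsto (fun θ => gAux α Φ θ t) (𝓝[<] (1:ℝ))
      (𝓝 ((1 / Real.sqrt (t * 2)) * (Φ α / α ^ 2))) := by
  obtain ⟨ht0, ht1⟩ := ht
  -- limit of the 1/sqrt factor
  have hB : Tendsto (fun θ : ℝ => t * (2 * θ + (1 - θ) * t)) (𝓝[<] (1:ℝ)) (𝓝 (t * 2)) := by
    have h : Continuous (fun θ : ℝ => t * (2 * θ + (1 - θ) * t)) := by fun_prop
    have := (h.tendsto 1).mono_left (nhdsWithin_le_nhds (s := Iio (1:ℝ)))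
    simpa using this
  have h1 : Tendsto (fun θ : ℝ => 1 / Real.sqrt (t * (2 * θ + (1 - θ) * t))) (𝓝[<] (1:ℝ))
      (𝓝 (1 / Real.sqrt (t * 2))) := by
    apply Tendsto.div tendsto_const_nhds (Real.continuous_sqrt.continuousAt.tendsto.comp hB)
    have : (0:ℝ) < t * 2 := by linarith
    exact (Real.sqrt_pos.2 this).ne'
  -- limit of the exponential factor
  have h2 : Tendsto (fun θ : ℝ => Real.exp (-(α ^ 2 * (θ + (1 - θ) * t) ^ 2 * (1 - θ)) /
      (4 * (t * (2 * θ + (1 - θ) * t))))) (𝓝[<] (1:ℝ)) (𝓝 1) := by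
    have hnum : Tendsto (fun θ : ℝ => -(α ^ 2 * (θ + (1 - θ) * t) ^ 2 * (1 - θ)))
        (𝓝[<] (1:ℝ)) (𝓝 0) := by
      have h : Continuous (fun θ : ℝ => -(α ^ 2 * (θ + (1 - θ) * t) ^ 2 * (1 - θ))) := by
        fun_prop
      have := (h.tendsto 1).mono_left (nhdsWithin_le_nhds (s := Iio (1:ℝ)))
      simpa using this
    have hden : Tendsto (fun θ : ℝ => 4 * (t * (2 * θ + (1 - θ) * t))) (𝓝[<] (1:ℝ))
        (𝓝 (4 * (t * 2))) := by
      have h : Continuous (fun θ : ℝ => 4 * (t * (2 * θ + (1 - θ) * t))) := by fun_prop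
      have := (h.tendsto 1).mono_left (nhdsWithin_le_nhds (s := Iio (1:ℝ)))
      simpa using this
    have hq : Tendsto (fun θ : ℝ => -(α ^ 2 * (θ + (1 - θ) * t) ^ 2 * (1 - θ)) /
        (4 * (t * (2 * θ + (1 - θ) * t)))) (𝓝[<] (1:ℝ)) (𝓝 0) := by
      have := hnum.div hden (by positivity : (4 * (t * 2)) ≠ 0)
      rw [zero_div] at this
      exact this
    have := (Real.continuous_exp.continuousAt.tendsto.comp hq)
    rw [Real.exp_zero] at this
    exact this
  -- limit of the Φ factor
  have hζ : Tendsto (fun θ : ℝ => α * (θ + (1 - θ) * t)) (𝓝[<] (1:ℝ)) (𝓝[Ioc 0 α] α) := by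
    rw [tendsto_nhdsWithin_iff]
    constructor
    · have h : Continuous (fun θ : ℝ => α * (θ + (1 - θ) * t)) := by fun_prop
      have := (h.tendsto 1).mono_left (nhdsWithin_le_nhds (s := Iio (1:ℝ)))
      simpa using this
    · filter_upwards [Ioo_mem_nhdsLT_of_mem (right_mem_Ioc.2 one_pos : (1:ℝ) ∈ Ioc 0 1)]
        with θ hθ
      obtain ⟨hθ0, hθ1⟩ := hθ
      constructor
      · have : 0 < θ + (1 - θ) * t := by nlinarith
        positivity
      · have h : θ + (1 - θ) * t ≤ 1 := by nlinarith
        simpa using mul_le_mul_of_nonneg_left h hα.le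
  have h3 : Tendsto (fun θ : ℝ => Φ (α * (θ + (1 - θ) * t)) / (α * (θ + (1 - θ) * t)) ^ 2)
      (𝓝[<] (1:ℝ)) (𝓝 (Φ α / α ^ 2)) := by
    have hΦt : Tendsto (fun θ : ℝ => Φ (α * (θ + (1 - θ) * t))) (𝓝[<] (1:ℝ)) (𝓝 (Φ α)) :=
      (hΦ α (right_mem_Ioc.2 hα)).tendsto.comp hζ
    have hd : Tendsto (fun θ : ℝ => (α * (θ + (1 - θ) * t)) ^ 2) (𝓝[<] (1:ℝ)) (𝓝 (α ^ 2)) := by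
      have h : Continuous (fun θ : ℝ => (α * (θ + (1 - θ) * t)) ^ 2) := by fun_prop
      have := (h.tendsto 1).mono_left (nhdsWithin_le_nhds (s := Iio (1:ℝ)))
      simpa using this
    exact hΦt.div hd (by positivity)
  simpa only [gAux, mul_one] using (h1.mul h2).mul h3

lemma one_div_sqrt_integrableOn : IntegrableOn (fun t : ℝ => 1 / Real.sqrt t) (Ioc (0:ℝ) 1) := by
  have hint : IntegrableOn (fun t : ℝ => t ^ (-(1:ℝ)/2)) (Ioc (0:ℝ) 1) := by
    have := intervalIntegral.intervalIntegrable_rpow' (a := 0) (b := 1) (r := -(1:ℝ)/2)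
      (by norm_num)
    rwa [intervalIntegrable_iff_integrableOn_Ioc_of_le (by norm_num)] at this
  apply hint.congr_fun ?_ measurableSet_Ioc
  intro t ht
  show t ^ (-(1:ℝ)/2) = 1 / Real.sqrt t
  rw [show (-(1:ℝ)/2) = -(1/2 : ℝ) by norm_num, Real.rpow_neg ht.1.le, ← Real.sqrt_eq_rpow,
    one_div]

lemma gAux_integral_tendsto (α : ℝ) (hα : 0 < α) (Φ : ℝ → ℝ)
    (hΦ : ContinuousOn Φ (Ioc 0 α)) :
    Tendsto (fun θ => ∫ t in Ioc (0:ℝ) 1, gAux α Φ θ t) (𝓝[<] (1:ℝ))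
      (𝓝 (∫ t in Ioc (0:ℝ) 1, (1 / Real.sqrt (t * 2)) * (Φ α / α ^ 2))) := by
  obtain ⟨M, hM⟩ := (isCompact_Icc : IsCompact (Icc (α/2) α)).exists_bound_of_continuousOn
    (hΦ.mono (fun x hx => ⟨lt_of_lt_of_le (by positivity) hx.1, hx.2⟩))
  have hM0 : 0 ≤ M := le_trans (norm_nonneg _) (hM α ⟨by linarith, le_refl α⟩)
  apply tendsto_integral_filter_of_dominated_convergence
    (bound := fun t => (M * 4 / α ^ 2) * (1 / Real.sqrt t))
  · filter_upwards [Ioo_mem_nhdsLT_of_mem (right_mem_Ioc.2 one_pos : (1:ℝ) ∈ Ioc 0 1)]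
      with θ hθ
    exact (gAux_contOn α hα Φ hΦ hθ).aestronglyMeasurable measurableSet_Ioc
  · filter_upwards [Ioo_mem_nhdsLT_of_mem (⟨by norm_num, le_refl 1⟩ : (1:ℝ) ∈ Ioc (1/2) 1)]
      with θ hθ
    rw [ae_restrict_iff' measurableSet_Ioc]
    filter_upwards with t ht
    obtain ⟨hθh, hθ1⟩ := hθ
    obtain ⟨ht0, ht1⟩ := ht
    have hst : 0 < Real.sqrt t := Real.sqrt_pos.2 ht0
    have hBt : t ≤ t * (2 * θ + (1 - θ) * t) := by
      nlinarith [mul_pos ht0 (by linarith : (0:ℝ) < 2 * θ - 1),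
        mul_nonneg (mul_nonneg (by linarith : (0:ℝ) ≤ 1 - θ) ht0.le) ht0.le]
    have hBpos : 0 < t * (2 * θ + (1 - θ) * t) := lt_of_lt_of_le ht0 hBt
    have hA : |1 / Real.sqrt (t * (2 * θ + (1 - θ) * t))| ≤ 1 / Real.sqrt t := by
      rw [abs_of_nonneg (by positivity)]
      exact one_div_le_one_div_of_le hst (Real.sqrt_le_sqrt hBt)
    have hE : |Real.exp (-(α ^ 2 * (θ + (1 - θ) * t) ^ 2 * (1 - θ)) /
        (4 * (t * (2 * θ + (1 - θ) * t))))| ≤ 1 := by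
      rw [abs_of_pos (Real.exp_pos _), Real.exp_le_one_iff]
      apply div_nonpos_of_nonpos_of_nonneg
      · exact neg_nonpos.2 (mul_nonneg (by positivity) (by linarith))
      · positivity
    have hu : 1/2 ≤ θ + (1 - θ) * t ∧ θ + (1 - θ) * t ≤ 1 := by
      constructor <;> nlinarith
    have hmem : α * (θ + (1 - θ) * t) ∈ Icc (α/2) α := by
      constructor
      · nlinarith
      · nlinarith
    have hP : |Φ (α * (θ + (1 - θ) * t)) / (α * (θ + (1 - θ) * t)) ^ 2| ≤ M * 4 / α ^ 2 := by
      rw [abs_div, abs_pow, sq_abs]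
      have hd : α ^ 2 / 4 ≤ (α * (θ + (1 - θ) * t)) ^ 2 := by
        nlinarith [mul_nonneg (mul_nonneg (sq_nonneg α)
          (by linarith [hu.1] : (0:ℝ) ≤ θ + (1 - θ) * t - 1/2))
          (by linarith [hu.1] : (0:ℝ) ≤ θ + (1 - θ) * t + 1/2)]
      calc |Φ (α * (θ + (1 - θ) * t))| / (α * (θ + (1 - θ) * t)) ^ 2
          ≤ M / (α ^ 2 / 4) := div_le_div₀ hM0 (hM _ hmem) (by positivity) hd
        _ = M * 4 / α ^ 2 := by field_simp
    calc ‖gAux α Φ θ t‖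
        = |1 / Real.sqrt (t * (2 * θ + (1 - θ) * t))| *
            |Real.exp (-(α ^ 2 * (θ + (1 - θ) * t) ^ 2 * (1 - θ)) /
              (4 * (t * (2 * θ + (1 - θ) * t))))| *
            |Φ (α * (θ + (1 - θ) * t)) / (α * (θ + (1 - θ) * t)) ^ 2| := by
          rw [gAux, Real.norm_eq_abs, abs_mul, abs_mul]
      _ ≤ (1 / Real.sqrt t) * 1 * (M * 4 / α ^ 2) := by
          gcongr <;> first | exact hA | exact hE | exact hP | positivity
      _ = (M * 4 / α ^ 2) * (1 / Real.sqrt t) := by ring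
  · exact one_div_sqrt_integrableOn.const_mul _
  · rw [ae_restrict_iff' measurableSet_Ioc]
    filter_upwards with t ht
    exact gAux_tendsto α hα Φ hΦ ht

lemma limit_integral_eval (c : ℝ) :
    ∫ t in Ioc (0:ℝ) 1, (1 / Real.sqrt (t * 2)) * c = Real.sqrt 2 * c := by
  rw [MeasureTheory.integral_mul_const]
  congr 1
  have h1 : ∫ t in Ioc (0:ℝ) 1, (1 / Real.sqrt (t * 2))
      = ∫ t in Ioc (0:ℝ) 1, (1 / Real.sqrt 2) * t ^ (-(1:ℝ)/2) := by
    refine setIntegral_congr_fun measurableSet_Ioc (fun t ht => ?_)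
    rw [Real.sqrt_mul ht.1.le, show (-(1:ℝ)/2) = -(1/2 : ℝ) by norm_num,
      Real.rpow_neg ht.1.le, ← Real.sqrt_eq_rpow]
    rw [one_div, mul_inv]
    ring
  rw [h1, MeasureTheory.integral_const_mul]
  have h2 : ∫ t in Ioc (0:ℝ) 1, t ^ (-(1:ℝ)/2) = 2 := by
    rw [← intervalIntegral.integral_of_le (by norm_num : (0:ℝ) ≤ 1)]
    rw [integral_rpow (Or.inl (by norm_num))]
    norm_num
  have hs2 : Real.sqrt 2 * Real.sqrt 2 = 2 := Real.mul_self_sqrt (by norm_num)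
  have hs2pos : (0:ℝ) < Real.sqrt 2 := by positivity
  rw [h2]
  field_simp
  rw [sq, hs2]


/-- G(θ)/√(1-θ) → √(2/π) u*/α as θ → 1⁻, where u* = Φ(α). -/
theorem kernelG_asymptotics_at_one
    (α : ℝ) (hα : 0 < α) (Φ : ℝ → ℝ) (hΦ : ContinuousOn Φ (Ioc 0 α)) :
    Tendsto (fun θ => kernelG α Φ θ / Real.sqrt (1 - θ))
      (nhdsWithin 1 (Iio 1))
      (nhds (Real.sqrt (2 / Real.pi) * (Φ α / α))) := by
  have hrepr : (fun θ : ℝ => (α / Real.sqrt Real.pi) * ∫ t in Ioc (0:ℝ) 1, gAux α Φ θ t)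
      =ᶠ[𝓝[<] (1:ℝ)] (fun θ => kernelG α Φ θ / Real.sqrt (1 - θ)) := by
    filter_upwards [Ioo_mem_nhdsLT_of_mem (right_mem_Ioc.2 one_pos : (1:ℝ) ∈ Ioc 0 1)]
      with θ hθ
    exact (kernelG_repr α hα Φ hθ).symm
  apply Tendsto.congr' hrepr
  have h := (gAux_integral_tendsto α hα Φ hΦ).const_mul (α / Real.sqrt Real.pi)
  rw [limit_integral_eval] at h
  convert h using 2
  have hπ : (0:ℝ) < Real.pi := Real.pi_pos
  have hsπ : Real.sqrt Real.pi ≠ 0 := by positivity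
  rw [Real.sqrt_div (by norm_num : (0:ℝ) ≤ 2) Real.pi]
  field_simp
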